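/- Let n ≥ 1, let W be an n×n real matrix, let M be a fixed matrix with entries in {0,1}, and let x ∈ ℝⁿ. Let M̂ be a random mask drawn from a probability distribution P over a finite set of n×n matrices with entries in {0,1}, such that for every M̂ in the support of P the Hadamard-masked matrix W⊙M̂ is invertible. For each M̂ define the reconstruction x̂(M̂) = (W⊙M̂)⁻¹ (W⊙M) x. Then the expected Euclidean reconstruction error satisfies 𝔼[‖x − x̂(M̂)‖] ≥ Σ_{M̂} P(M̂) · (σ_min(W⊙(M̂−M)) / σ_max(W⊙M̂)) · ‖x‖, where for a square real matrix A, σ_min(A) denotes inf over unit vectors v of ‖Av‖ and σ_max(A) denotes the operator norm of A with respect to the Euclidean norm. -/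

import Mathlib

open Matrix

/-- The Euclidean norm of a vector in `ℝⁿ`. -/
noncomputable def euclNorm {n : ℕ} (x : Fin n → ℝ) : ℝ :=
  Real.sqrt (∑ i, x i ^ 2)

/-- `σ_min(A) = inf_{‖v‖ = 1} ‖A v‖` (with respect to the Euclidean norm). -/
noncomputable def sigmaMin {n : ℕ} (A : Matrix (Fin n) (Fin n) ℝ) : ℝ :=
  ⨅ v : {v : Fin n → ℝ // euclNorm v = 1}, euclNorm (A *ᵥ (v : Fin n → ℝ))

/-- `σ_max(A) = sup_{‖v‖ = 1} ‖A v‖` (the Euclidean operator norm). -/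
noncomputable def sigmaMax {n : ℕ} (A : Matrix (Fin n) (Fin n) ℝ) : ℝ :=
  ⨆ v : {v : Fin n → ℝ // euclNorm v = 1}, euclNorm (A *ᵥ (v : Fin n → ℝ))

noncomputable def toE {n : ℕ} (x : Fin n → ℝ) : EuclideanSpace ℝ (Fin n) :=
  (WithLp.equiv 2 _).symm x

lemma euclNorm_eq_norm {n : ℕ} (x : Fin n → ℝ) : euclNorm x = ‖toE x‖ := by
  rw [EuclideanSpace.norm_eq]
  simp [euclNorm, toE, Real.norm_eq_abs, sq_abs]

lemma euclNorm_nonneg {n : ℕ} (x : Fin n → ℝ) : 0 ≤ euclNorm x := by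
  rw [euclNorm_eq_norm]; exact norm_nonneg _

lemma euclNorm_smul {n : ℕ} (c : ℝ) (x : Fin n → ℝ) :
    euclNorm (c • x) = |c| * euclNorm x := by
  rw [euclNorm_eq_norm, euclNorm_eq_norm]
  have : toE (c • x) = c • toE x := rfl
  rw [this, norm_smul, Real.norm_eq_abs]

lemma euclNorm_eq_zero {n : ℕ} (x : Fin n → ℝ) : euclNorm x = 0 ↔ x = 0 := by
  rw [euclNorm_eq_norm, norm_eq_zero]
  constructor
  · intro h; funext i; exact congrFun (congrArg WithLp.ofLp h) i
  · intro h; subst h; rfl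

lemma euclNorm_zero {n : ℕ} : euclNorm (0 : Fin n → ℝ) = 0 := (euclNorm_eq_zero _).mpr rfl

set_option synthInstance.maxHeartbeats 1000000 in
noncomputable def mulVecCLM {n : ℕ} (A : Matrix (Fin n) (Fin n) ℝ) :
    EuclideanSpace ℝ (Fin n) →L[ℝ] EuclideanSpace ℝ (Fin n) :=
  LinearMap.toContinuousLinearMap
    { toFun := fun y => toE (A *ᵥ (WithLp.equiv 2 _ y))
      map_add' := by intro y z; simp [toE, Matrix.mulVec_add]
      map_smul' := by intro c y; simp [toE, Matrix.mulVec_smul] }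

lemma mulVecCLM_apply {n : ℕ} (A : Matrix (Fin n) (Fin n) ℝ) (y : Fin n → ℝ) :
    mulVecCLM A (toE y) = toE (A *ᵥ y) := rfl

set_option synthInstance.maxHeartbeats 1000000 in
lemma bddAbove_range {n : ℕ} (A : Matrix (Fin n) (Fin n) ℝ) :
    BddAbove (Set.range fun v : {v : Fin n → ℝ // euclNorm v = 1} =>
      euclNorm (A *ᵥ (v : Fin n → ℝ))) := by
  refine ⟨‖mulVecCLM A‖, ?_⟩
  rintro r ⟨⟨v, hv⟩, rfl⟩
  have h := (mulVecCLM A).le_opNorm (toE v)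
  rw [mulVecCLM_apply, ← euclNorm_eq_norm, ← euclNorm_eq_norm] at h
  simpa [hv] using h

lemma exists_unit {n : ℕ} (hn : 1 ≤ n) : ∃ v : Fin n → ℝ, euclNorm v = 1 := by
  refine ⟨Pi.single ⟨0, hn⟩ 1, ?_⟩
  simp [euclNorm, Pi.single_apply]

lemma sigmaMax_bound {n : ℕ} (A : Matrix (Fin n) (Fin n) ℝ) (y : Fin n → ℝ) :
    euclNorm (A *ᵥ y) ≤ sigmaMax A * euclNorm y := by
  rcases eq_or_ne y 0 with rfl | hy
  · simp [Matrix.mulVec_zero, euclNorm_zero]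
  · have hny : euclNorm y ≠ 0 := fun h => hy ((euclNorm_eq_zero y).mp h)
    have hpos : 0 < euclNorm y := lt_of_le_of_ne (euclNorm_nonneg y) (Ne.symm hny)
    set c := (euclNorm y)⁻¹ with hc
    have hv : euclNorm (c • y) = 1 := by
      rw [euclNorm_smul, abs_of_pos (inv_pos.mpr hpos)]
      exact inv_mul_cancel₀ hny
    have hle : euclNorm (A *ᵥ (c • y)) ≤ sigmaMax A :=
      le_ciSup (bddAbove_range A) (⟨c • y, hv⟩ : {v : Fin n → ℝ // euclNorm v = 1})
    rw [Matrix.mulVec_smul, euclNorm_smul, abs_of_pos (inv_pos.mpr hpos)] at hle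
    calc euclNorm (A *ᵥ y) = (c * euclNorm (A *ᵥ y)) * euclNorm y := by
          rw [hc]; field_simp
      _ ≤ sigmaMax A * euclNorm y := by
          apply mul_le_mul_of_nonneg_right hle (le_of_lt hpos)

lemma sigmaMin_bound {n : ℕ} (hn : 1 ≤ n) (A : Matrix (Fin n) (Fin n) ℝ) (y : Fin n → ℝ) :
    sigmaMin A * euclNorm y ≤ euclNorm (A *ᵥ y) := by
  rcases eq_or_ne y 0 with rfl | hy
  · simp [Matrix.mulVec_zero, euclNorm_zero]
  · have hny : euclNorm y ≠ 0 := fun h => hy ((euclNorm_eq_zero y).mp h)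
    have hpos : 0 < euclNorm y := lt_of_le_of_ne (euclNorm_nonneg y) (Ne.symm hny)
    set c := (euclNorm y)⁻¹ with hc
    have hv : euclNorm (c • y) = 1 := by
      rw [euclNorm_smul, abs_of_pos (inv_pos.mpr hpos)]
      exact inv_mul_cancel₀ hny
    have hle : sigmaMin A ≤ euclNorm (A *ᵥ (c • y)) :=
      ciInf_le ⟨0, by rintro r ⟨v, rfl⟩; exact euclNorm_nonneg _⟩
        (⟨c • y, hv⟩ : {v : Fin n → ℝ // euclNorm v = 1})
    rw [Matrix.mulVec_smul, euclNorm_smul, abs_of_pos (inv_pos.mpr hpos)] at hle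
    calc sigmaMin A * euclNorm y ≤ (c * euclNorm (A *ᵥ y)) * euclNorm y :=
          mul_le_mul_of_nonneg_right hle (le_of_lt hpos)
      _ = euclNorm (A *ᵥ y) := by rw [hc]; field_simp

lemma sigmaMin_nonneg {n : ℕ} (hn : 1 ≤ n) (A : Matrix (Fin n) (Fin n) ℝ) :
    0 ≤ sigmaMin A := by
  obtain ⟨v, hv⟩ := exists_unit (n := n) hn
  have : Nonempty {v : Fin n → ℝ // euclNorm v = 1} := ⟨⟨v, hv⟩⟩
  exact Real.iInf_nonneg fun v => euclNorm_nonneg _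

lemma sigmaMax_pos {n : ℕ} (hn : 1 ≤ n) (A : Matrix (Fin n) (Fin n) ℝ)
    (hA : IsUnit A) : 0 < sigmaMax A := by
  obtain ⟨v, hv⟩ := exists_unit (n := n) hn
  have hv0 : v ≠ 0 := by
    intro h; rw [h, euclNorm_zero] at hv; norm_num at hv
  have hAv : A *ᵥ v ≠ 0 := by
    intro h
    have := Matrix.mulVec_injective_iff_isUnit.mpr hA
    apply hv0
    apply this
    rw [h, Matrix.mulVec_zero]
  have h1 : 0 < euclNorm (A *ᵥ v) := by
    rcases lt_or_eq_of_le (euclNorm_nonneg (A *ᵥ v)) with h | h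
    · exact h
    · exact absurd ((euclNorm_eq_zero _).mp h.symm) hAv
  exact lt_of_lt_of_le h1 (le_ciSup (bddAbove_range A) ⟨v, hv⟩)

lemma hadamard_sub' {n : ℕ} (W A M : Matrix (Fin n) (Fin n) ℝ) :
    W ⊙ (A - M) = W ⊙ A - W ⊙ M := by
  ext i j; simp [Matrix.hadamard, mul_sub]

/-- **Theorem 1 of the paper.** Lower bound on the expected data
reconstruction error of an attacker who guesses a random mask `M̂ ∼ P` and
reconstructs `x̂(M̂) = (W ⊙ M̂)⁻¹ (W ⊙ M) x`. -/
theorem expected_reconstruction_error_lower_bound {n : ℕ} (hn : 1 ≤ n)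
    (W M : Matrix (Fin n) (Fin n) ℝ)
    (hM : ∀ i j, M i j = 0 ∨ M i j = 1)
    (x : Fin n → ℝ)
    (masks : Finset (Matrix (Fin n) (Fin n) ℝ))
    (hmasks : ∀ A ∈ masks, ∀ i j, A i j = 0 ∨ A i j = 1)
    (P : Matrix (Fin n) (Fin n) ℝ → ℝ)
    (hP0 : ∀ A ∈ masks, 0 ≤ P A)
    (hP1 : ∑ A ∈ masks, P A = 1)
    (hsupp : ∀ A ∈ masks, P A ≠ 0 → IsUnit (W ⊙ A)) :
    ∑ A ∈ masks, P A * euclNorm (x - (W ⊙ A)⁻¹ *ᵥ ((W ⊙ M) *ᵥ x)) ≥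
      ∑ A ∈ masks, P A * (sigmaMin (W ⊙ (A - M)) / sigmaMax (W ⊙ A)) * euclNorm x := by
  apply Finset.sum_le_sum
  intro A hA
  rcases eq_or_ne (P A) 0 with h0 | h0
  · simp [h0]
  · have hU : IsUnit (W ⊙ A) := hsupp A hA h0
    set B := W ⊙ A with hB
    set D := W ⊙ (A - M) with hD
    have hdet : IsUnit B.det := (Matrix.isUnit_iff_isUnit_det B).mp hU
    have hBB : B⁻¹ * B = 1 := Matrix.nonsing_inv_mul B hdet
    have hBB' : B * B⁻¹ = 1 := Matrix.mul_nonsing_inv B hdet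
    have hDsub : D = B - W ⊙ M := hadamard_sub' W A M
    have key : x - B⁻¹ *ᵥ ((W ⊙ M) *ᵥ x) = B⁻¹ *ᵥ (D *ᵥ x) := by
      rw [hDsub, Matrix.sub_mulVec, Matrix.mulVec_sub, Matrix.mulVec_mulVec, Matrix.mulVec_mulVec, hBB,
        Matrix.one_mulVec]
    set e := x - B⁻¹ *ᵥ ((W ⊙ M) *ᵥ x) with he
    have hBe : B *ᵥ e = D *ᵥ x := by
      rw [key, Matrix.mulVec_mulVec, hBB', Matrix.one_mulVec]
    have h1 : sigmaMin D * euclNorm x ≤ euclNorm (D *ᵥ x) := sigmaMin_bound hn D x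
    have h2 : euclNorm (D *ᵥ x) ≤ sigmaMax B * euclNorm e := by
      rw [← hBe]; exact sigmaMax_bound B e
    have hσ : 0 < sigmaMax B := sigmaMax_pos hn B hU
    have hmain : sigmaMin D / sigmaMax B * euclNorm x ≤ euclNorm e := by
      rw [div_mul_eq_mul_div, div_le_iff₀ hσ]
      calc sigmaMin D * euclNorm x ≤ sigmaMax B * euclNorm e := le_trans h1 h2
        _ = euclNorm e * sigmaMax B := mul_comm _ _
    have hPA : 0 ≤ P A := hP0 A hA
    calc P A * (sigmaMin D / sigmaMax B) * euclNorm x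
        = P A * (sigmaMin D / sigmaMax B * euclNorm x) := by ring
      _ ≤ P A * euclNorm e := mul_le_mul_of_nonneg_left hmain hPA
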